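/- (Fidelity vs. Hilbert's projective metric.) Let ρ₁, ρ₂ be density matrices in M_d(ℂ). Then √(1 − F(ρ₁,ρ₂)²) ≤ tanh(h_{S₊}(ρ₁,ρ₂)/4), where F(ρ₁,ρ₂) := tr √(ρ₁^{1/2} ρ₂ ρ₁^{1/2}) is the fidelity and tanh(∞/4) := 1. -/

import Mathlib

open scoped ComplexOrder
open Matrix

noncomputable section

variable {n : Type*} [Fintype n] [DecidableEq n]

/-- `sup(A/B) := inf {λ : ℝ | A ≤ λ B}` w.r.t. the Loewner order (`⊤` if no such `λ` exists). -/
def msupRatio (A B : Matrix n n ℂ) : EReal :=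
  sInf ((fun l : ℝ => (l : EReal)) '' {l : ℝ | (l • B - A).PosSemidef})

/-- `inf(A/B) := sup {λ : ℝ | λ B ≤ A}` w.r.t. the Loewner order. -/
def minfRatio (A B : Matrix n n ℂ) : EReal :=
  sSup ((fun l : ℝ => (l : EReal)) '' {l : ℝ | (A - l • B).PosSemidef})

/-- Hilbert's projective metric `h_{S₊}(A,B) = ln (sup(A/B) · sup(B/A)) ∈ [0,∞]`
w.r.t. the positive semidefinite cone. -/
def mHilbert (A B : Matrix n n ℂ) : EReal :=
  if msupRatio A B = ⊤ ∨ msupRatio B A = ⊤ then ⊤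
  else ((Real.log ((msupRatio A B).toReal * (msupRatio B A).toReal) : ℝ) : EReal)

/-- `tanh(x/4)`, with the convention `tanh(⊤/4) = 1`. -/
def tanhQuarter (x : EReal) : ℝ :=
  if x = ⊤ then 1 else Real.tanh (x.toReal / 4)
open Classical in
/-- The positive semidefinite square root of a PSD matrix (junk value `0` otherwise). -/
def psdSqrt (A : Matrix n n ℂ) : Matrix n n ℂ :=
  if h : A.PosSemidef then
    (h.1.eigenvectorUnitary : Matrix n n ℂ) *
      diagonal (((↑) : ℝ → ℂ) ∘ Real.sqrt ∘ h.1.eigenvalues) *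
      (star h.1.eigenvectorUnitary : Matrix n n ℂ)
  else 0

/-- The positive semidefinite square root (the value of `psdSqrt`). -/
def Matrix.PosSemidef.sqrt {A : Matrix n n ℂ} (h : A.PosSemidef) : Matrix n n ℂ :=
  (h.1.eigenvectorUnitary : Matrix n n ℂ) *
    diagonal (((↑) : ℝ → ℂ) ∘ Real.sqrt ∘ h.1.eigenvalues) *
    (star h.1.eigenvectorUnitary : Matrix n n ℂ)

lemma Matrix.PosSemidef.posSemidef_sqrt {A : Matrix n n ℂ} (h : A.PosSemidef) :
    h.sqrt.PosSemidef := by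
  have hd : (diagonal (((↑) : ℝ → ℂ) ∘ Real.sqrt ∘ h.1.eigenvalues)).PosSemidef := by
    apply PosSemidef.diagonal
    intro i
    simp only [Pi.zero_apply, Function.comp_apply]
    exact_mod_cast Real.sqrt_nonneg _
  have := hd.mul_mul_conjTranspose_same (h.1.eigenvectorUnitary : Matrix n n ℂ)
  rwa [← star_eq_conjTranspose] at this

lemma Matrix.PosSemidef.sqrt_mul_self {A : Matrix n n ℂ} (h : A.PosSemidef) :
    h.sqrt * h.sqrt = A := by
  set U : Matrix n n ℂ := (h.1.eigenvectorUnitary : Matrix n n ℂ)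
  have hU₁ : star U * U = 1 := Unitary.coe_star_mul_self _
  have hA : A = U * diagonal (RCLike.ofReal ∘ h.1.eigenvalues) * star U := by
    conv_lhs => rw [h.1.spectral_theorem]
    rfl
  have hD : diagonal (((↑) : ℝ → ℂ) ∘ Real.sqrt ∘ h.1.eigenvalues) *
      diagonal (((↑) : ℝ → ℂ) ∘ Real.sqrt ∘ h.1.eigenvalues)
      = diagonal (RCLike.ofReal ∘ h.1.eigenvalues) := by
    rw [diagonal_mul_diagonal]
    congr 1
    funext i
    simp only [Function.comp_apply]
    rw [← Complex.ofReal_mul, Real.mul_self_sqrt (h.eigenvalues_nonneg i)]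
    rfl
  conv_rhs => rw [hA]
  unfold Matrix.PosSemidef.sqrt
  rw [← hD]
  simp only [mul_assoc]
  rw [← mul_assoc (star U) U, hU₁, one_mul]

/-- The fidelity `F(ρ₁,ρ₂) := tr √(ρ₁^{1/2} ρ₂ ρ₁^{1/2})`. -/
def fidelity (ρ₁ ρ₂ : Matrix n n ℂ) : ℝ :=
  ((psdSqrt (psdSqrt ρ₁ * ρ₂ * psdSqrt ρ₁)).trace).re

lemma real_smul_mat (l : ℝ) (B : Matrix n n ℂ) : l • B = (l : ℂ) • B := by
  ext i j; simp [Matrix.smul_apply, Complex.real_smul]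

lemma psd_smul {A : Matrix n n ℂ} (hA : A.PosSemidef) {l : ℝ} (hl : 0 ≤ l) :
    (l • A).PosSemidef := by
  rw [real_smul_mat]
  refine PosSemidef.of_dotProduct_mulVec_nonneg ?_ ?_
  · unfold Matrix.IsHermitian
    rw [conjTranspose_smul]
    simp [hA.1.eq, Complex.conj_ofReal]
  · intro x
    rw [smul_mulVec, dotProduct_smul]
    exact mul_nonneg (by exact_mod_cast hl) (hA.dotProduct_mulVec_nonneg x)

lemma trace_psd_nonneg {A : Matrix n n ℂ} (hA : A.PosSemidef) : 0 ≤ A.trace := by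
  rw [Matrix.trace]
  apply Finset.sum_nonneg
  intro i _
  have := hA.dotProduct_mulVec_nonneg (Pi.single i 1)
  simpa [Matrix.diag, dotProduct, mulVec, Pi.single_apply] using this

lemma trace_mul_psd_nonneg {A B : Matrix n n ℂ} (hA : A.PosSemidef) (hB : B.PosSemidef) :
    0 ≤ (A * B).trace := by
  have h1 : A * B = hA.sqrt * (hA.sqrt * B) := by
    rw [← mul_assoc, hA.sqrt_mul_self]
  rw [h1, trace_mul_comm]
  have h2 : hA.sqrt * B * hA.sqrt = hA.sqrt * B * hA.sqrtᴴ := by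
    rw [hA.posSemidef_sqrt.1.eq]
  rw [mul_assoc, ← mul_assoc, h2]
  exact trace_psd_nonneg (hB.mul_mul_conjTranspose_same hA.sqrt)

/-- Operator monotonicity of the square root (square form). -/
lemma psd_sub_of_sq_sub {A B : Matrix n n ℂ} (hA : A.PosSemidef) (hB : B.PosSemidef)
    (h : (B * B - A * A).PosSemidef) : (B - A).PosSemidef := by
  have hD : (B - A).IsHermitian := hB.1.sub hA.1
  apply hD.posSemidef_iff_eigenvalues_nonneg.mpr
  intro i
  by_contra hneg
  push_neg at hneg
  rw [Pi.zero_apply] at hneg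
  set t : ℝ := hD.eigenvalues i with ht
  have htne : t ≠ 0 := ne_of_lt hneg
  set v : n → ℂ := ⇑(hD.eigenvectorBasis i) with hv
  have hv0 : v ≠ 0 := by
    intro h0
    exact (hD.eigenvectorBasis.orthonormal.ne_zero i) (by ext j; exact congrFun h0 j)
  have hv' : (B - A) *ᵥ v = t • v := hD.mulVec_eigenvectorBasis i
  have key : star v ⬝ᵥ (B * B - A * A) *ᵥ v
      = t * (star v ⬝ᵥ B *ᵥ v + star v ⬝ᵥ A *ᵥ v) := calc
    star v ⬝ᵥ (B * B - A * A) *ᵥ v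
      = star v ⬝ᵥ B *ᵥ (B - A) *ᵥ v + star v ⬝ᵥ (B - A) *ᵥ A *ᵥ v := by
      rw [mulVec_mulVec, mulVec_mulVec, ← dotProduct_add, ← add_mulVec, mul_sub, sub_mul,
        add_sub, sub_add_cancel]
    _ = t * (star v ⬝ᵥ B *ᵥ v) + (star v) ᵥ* (B - A)ᴴ ⬝ᵥ A *ᵥ v := by
      rw [hv', mulVec_smul, dotProduct_smul, RCLike.real_smul_eq_coe_mul,
        dotProduct_mulVec _ (B - A), hD.eq]
      exact rfl
    _ = t * (star v ⬝ᵥ B *ᵥ v + star v ⬝ᵥ A *ᵥ v) := by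
      have h1 : star v ᵥ* (B - A)ᴴ = star (t • v) := by rw [← star_mulVec, hv']
      rw [h1, star_smul, star_trivial t, smul_dotProduct, Complex.real_smul, mul_add]
  have h0 : (0:ℂ) ≤ (t : ℂ) * (star v ⬝ᵥ B *ᵥ v + star v ⬝ᵥ A *ᵥ v) := key ▸ h.dotProduct_mulVec_nonneg v
  have hSB := hB.dotProduct_mulVec_nonneg v
  have hSA := hA.dotProduct_mulVec_nonneg v
  set S : ℂ := star v ⬝ᵥ B *ᵥ v + star v ⬝ᵥ A *ᵥ v with hSdef
  have hS : (0:ℂ) ≤ S := add_nonneg hSB hSA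
  have hSim : S.im = 0 := by
    rw [Complex.le_def] at hS; simpa using hS.2.symm
  have hSre : 0 ≤ S.re := by
    rw [Complex.le_def] at hS; simpa using hS.1
  have hre0 : 0 ≤ t * S.re := by
    rw [Complex.le_def] at h0
    simpa [Complex.mul_re, hSim] using h0.1
  have hSre0 : S.re = 0 := le_antisymm (by nlinarith) hSre
  have hSzero : S = 0 := Complex.ext (by simp [hSre0]) (by simp [hSim])
  have hzero : star v ⬝ᵥ B *ᵥ v = 0 ∧ star v ⬝ᵥ A *ᵥ v = 0 := by
    constructor
    · refine le_antisymm ?_ hSB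
      rw [hSdef, add_eq_zero_iff_eq_neg] at hSzero
      rw [hSzero]; exact neg_nonpos.mpr hSA
    · refine le_antisymm ?_ hSA
      rw [hSdef, add_comm, add_eq_zero_iff_eq_neg] at hSzero
      rw [hSzero]; exact neg_nonpos.mpr hSB
  have hAv : A *ᵥ v = 0 := (hA.dotProduct_mulVec_zero_iff v).mp hzero.2
  have hBv : B *ᵥ v = 0 := (hB.dotProduct_mulVec_zero_iff v).mp hzero.1
  have : t • v = 0 := by rw [← hv', sub_mulVec, hAv, hBv, sub_zero]
  rcases smul_eq_zero.mp this with h' | h'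
  · exact htne h'
  · exact hv0 h'

lemma retrace_le_trace_of_sq_eq {M P : Matrix n n ℂ} (hP : P.PosSemidef)
    (hPM : P * P = M * Mᴴ) : (M.trace).re ≤ (P.trace).re := by
  set U : Matrix n n ℂ := (hP.1.eigenvectorUnitary : Matrix n n ℂ) with hUdef
  set p : n → ℝ := hP.1.eigenvalues with hpdef
  have hU₁ : star U * U = 1 := Unitary.coe_star_mul_self _
  have hU₂ : U * star U = 1 := (Matrix.mem_unitaryGroup_iff).mp (hP.1.eigenvectorUnitary).2
  have hdiag : star U * P * U = diagonal (RCLike.ofReal ∘ p) := by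
    have := hP.1.conjStarAlgAut_star_eigenvectorUnitary
    simpa [Unitary.conjStarAlgAut_apply, Unitary.coe_star] using this
  set N : Matrix n n ℂ := star U * M * U with hNdef
  have htr : N.trace = M.trace := by
    rw [hNdef, trace_mul_comm, ← mul_assoc, hU₂, one_mul]
  have hcanU : ∀ X : Matrix n n ℂ, U * (star U * X) = X := fun X => by
    rw [← mul_assoc, hU₂, one_mul]
  have hcanU' : ∀ X : Matrix n n ℂ, star U * (U * X) = X := fun X => by
    rw [← mul_assoc, hU₁, one_mul]
  have hNN : N * Nᴴ = diagonal (fun i => ((p i : ℂ))^2) := by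
    have h1 : Nᴴ = star U * Mᴴ * U := by
      rw [hNdef]
      simp [conjTranspose_mul, mul_assoc, star_eq_conjTranspose, conjTranspose_conjTranspose]
    rw [h1, hNdef]
    calc star U * M * U * (star U * Mᴴ * U)
        = star U * (M * Mᴴ) * U := by
          simp only [mul_assoc, hcanU]
      _ = star U * (P * P) * U := by rw [hPM]
      _ = (star U * P * U) * (star U * P * U) := by
          simp only [mul_assoc, hcanU]
      _ = diagonal (fun i => ((p i : ℂ))^2) := by
          rw [hdiag, diagonal_mul_diagonal]
          congr 1
          funext i
          simp [pow_two]
  have hpnn : ∀ i, 0 ≤ p i := hP.eigenvalues_nonneg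
  have hNsq : ∀ i, Complex.normSq (N i i) ≤ (p i)^2 := by
    intro i
    have h2 : (N * Nᴴ) i i = ((p i : ℂ))^2 := by rw [hNN, diagonal_apply_eq]
    have h3 : (N * Nᴴ) i i = ∑ j, (Complex.normSq (N i j) : ℂ) := by
      rw [mul_apply]
      congr 1
      funext j
      rw [conjTranspose_apply, ← Complex.mul_conj]
      rfl
    have h4 : ∑ j, Complex.normSq (N i j) = (p i)^2 := by
      have := h3.symm.trans h2
      have := congrArg Complex.re this
      simpa [← Complex.ofReal_pow] using this
    rw [← h4]
    exact Finset.single_le_sum (f := fun j => Complex.normSq (N i j))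
      (fun j _ => Complex.normSq_nonneg _) (Finset.mem_univ i)
  have hNre : ∀ i, (N i i).re ≤ p i := by
    intro i
    refine le_trans (Complex.re_le_norm _) ?_
    have : ‖N i i‖ ≤ Real.sqrt ((p i)^2) := by
      rw [Complex.norm_def]
      exact Real.sqrt_le_sqrt (hNsq i)
    rwa [Real.sqrt_sq (hpnn i)] at this
  have htrP : (P.trace).re = ∑ i, p i := by
    have : P.trace = (diagonal (RCLike.ofReal ∘ p) : Matrix n n ℂ).trace := by
      conv_lhs => rw [hP.1.spectral_theorem]
      rw [Unitary.conjStarAlgAut_apply, trace_mul_comm, ← mul_assoc, hU₁,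
        one_mul]
    rw [this, trace_diagonal]
    simp [Complex.ofReal_re]
  have htrM : (M.trace).re = ∑ i, (N i i).re := by
    rw [← htr, Matrix.trace]
    simp [Matrix.diag]
  rw [htrM, htrP]
  exact Finset.sum_le_sum (fun i _ => hNre i)

lemma fid_ge_retrace {ρ₁ ρ₂ : Matrix n n ℂ} (h₁ : ρ₁.PosSemidef) (h₂ : ρ₂.PosSemidef) :
    ((h₁.sqrt * h₂.sqrt).trace).re ≤ fidelity ρ₁ ρ₂ := by
  set A := h₁.sqrt with hA
  set B := h₂.sqrt with hB
  have hX : (A * ρ₂ * A).PosSemidef := by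
    have := h₂.mul_mul_conjTranspose_same A
    rwa [h₁.posSemidef_sqrt.1.eq] at this
  have hfid : fidelity ρ₁ ρ₂ = ((hX.sqrt).trace).re := by
    rw [fidelity]
    have hps1 : psdSqrt ρ₁ = A := dif_pos h₁
    rw [hps1]
    have hps2 : psdSqrt (A * ρ₂ * A) = hX.sqrt := dif_pos hX
    rw [hps2]
  rw [hfid]
  apply retrace_le_trace_of_sq_eq hX.posSemidef_sqrt
  rw [hX.sqrt_mul_self, conjTranspose_mul, h₁.posSemidef_sqrt.1.eq, h₂.posSemidef_sqrt.1.eq,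
    mul_assoc A B, ← mul_assoc B B, h₂.sqrt_mul_self, ← mul_assoc]

lemma tanh_half_log {y : ℝ} (hy : 0 < y) :
    Real.tanh (Real.log y / 2) = (y - 1) / (y + 1) := by
  have hw : Real.exp (Real.log y / 2) ^ 2 = y := by
    rw [← Real.exp_nat_mul]
    push_cast
    rw [mul_div_cancel₀ _ (two_ne_zero), Real.exp_log hy]
  set w := Real.exp (Real.log y / 2) with hwdef
  have hw0 : 0 < w := Real.exp_pos _
  rw [Real.tanh_eq_sinh_div_cosh, Real.sinh_eq, Real.cosh_eq, Real.exp_neg, ← hwdef, ← hw]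
  have h1 : 0 < w + w⁻¹ := by positivity
  field_simp
lemma main_core {ρ₁ ρ₂ : Matrix n n ℂ} (h₁ : ρ₁.PosSemidef) (h₂ : ρ₂.PosSemidef)
    (t₁ : ρ₁.trace = 1) (t₂ : ρ₂.trace = 1) {s t : ℝ}
    (hs : ((s : ℝ) • ρ₂ - ρ₁).PosSemidef) (ht : ((t : ℝ) • ρ₁ - ρ₂).PosSemidef)
    (hs1 : 1 ≤ s) (ht1 : 1 ≤ t) :
    Real.sqrt (1 - fidelity ρ₁ ρ₂ ^ 2) ≤ Real.tanh (Real.log (s * t) / 4) := by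
  have hs0 : (0:ℝ) < s := lt_of_lt_of_le one_pos hs1
  have ht0 : (0:ℝ) < t := lt_of_lt_of_le one_pos ht1
  set a : ℝ := Real.sqrt s with hadef
  set b : ℝ := 1 / Real.sqrt t with hbdef
  have ha1 : 1 ≤ a := by
    rw [hadef, show (1:ℝ) = Real.sqrt 1 by simp]
    exact Real.sqrt_le_sqrt hs1
  have hb0 : 0 < b := by positivity
  have hb1 : b ≤ 1 := by
    rw [hbdef]
    rw [div_le_one (by positivity)]
    rw [show (1:ℝ) = Real.sqrt 1 by simp]
    exact Real.sqrt_le_sqrt ht1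
  have ha0 : 0 < a := lt_of_lt_of_le one_pos ha1
  have haa : a * a = s := Real.mul_self_sqrt hs0.le
  have hbb : b * b = 1 / t := by
    rw [hbdef, div_mul_div_comm, one_mul, Real.mul_self_sqrt ht0.le]
  set A := h₁.sqrt with hAdef
  set B := h₂.sqrt with hBdef
  have hApsd : A.PosSemidef := h₁.posSemidef_sqrt
  have hBpsd : B.PosSemidef := h₂.posSemidef_sqrt
  have hAA : A * A = ρ₁ := h₁.sqrt_mul_self
  have hBB : B * B = ρ₂ := h₂.sqrt_mul_self
  -- X = a•B - A is PSD
  have hX : (a • B - A).PosSemidef := by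
    apply psd_sub_of_sq_sub hApsd (psd_smul hBpsd ha0.le)
    have : (a • B) * (a • B) = s • ρ₂ := by
      rw [smul_mul_assoc, mul_smul_comm, smul_smul, haa, hBB]
    rw [this, hAA]
    exact hs
  -- Y = A - b•B is PSD
  have hY : (A - b • B).PosSemidef := by
    apply psd_sub_of_sq_sub (psd_smul hBpsd hb0.le) hApsd
    have h1 : (b • B) * (b • B) = (1/t) • ρ₂ := by
      rw [smul_mul_assoc, mul_smul_comm, smul_smul, hbb, hBB]
    rw [h1, hAA]
    have := psd_smul ht (le_of_lt (by positivity : (0:ℝ) < 1/t))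
    have heq : (1/t) • ((t : ℝ) • ρ₁ - ρ₂) = ρ₁ - (1/t) • ρ₂ := by
      rw [smul_sub, smul_smul, one_div, inv_mul_cancel₀ (ne_of_gt ht0), one_smul]
    rwa [heq] at this
  -- trace inequality
  set r : ℝ := ((A * B).trace).re with hrdef
  have hkey : 1 + a * b ≤ (a + b) * r := by
    have h0 := trace_mul_psd_nonneg hX hY
    have hexp : ((a • B - A) * (A - b • B)).trace
        = ((a : ℂ) + (b : ℂ)) * (A * B).trace - (((a * b : ℝ) : ℂ) + 1) := by
      rw [real_smul_mat a, real_smul_mat b]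
      rw [sub_mul, mul_sub, mul_sub, smul_mul_assoc, smul_mul_assoc, mul_smul_comm,
        mul_smul_comm, smul_smul]
      rw [trace_sub, trace_sub, trace_sub, trace_smul, trace_smul, trace_smul,
        hAA, hBB, t₁, t₂, trace_mul_comm B A]
      push_cast
      ring_nf
    rw [hexp, Complex.le_def] at h0
    have h0re := h0.1
    simp only [Complex.sub_re, Complex.add_re, Complex.mul_re, Complex.add_im,
      Complex.ofReal_re, Complex.ofReal_im, Complex.one_re, Complex.zero_re] at h0re
    rw [← hrdef] at h0re
    linarith
  have hr_le_F : r ≤ fidelity ρ₁ ρ₂ := fid_ge_retrace h₁ h₂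
  set F := fidelity ρ₁ ρ₂ with hFdef
  have hab0 : (0:ℝ) < a + b := by positivity
  have hF : 1 + a * b ≤ (a + b) * F :=
    le_trans hkey (mul_le_mul_of_nonneg_left hr_le_F hab0.le)
  have h1F : 1 - F ^ 2 ≤ ((a - b) / (a + b)) ^ 2 := by
    rw [div_pow, le_div_iff₀ (by positivity)]
    have h2 : (1 + a * b) ^ 2 ≤ ((a + b) * F) ^ 2 :=
      pow_le_pow_left₀ (by positivity) hF 2
    nlinarith [h2, sq_nonneg (1 - a * b)]
  have hsq : Real.sqrt (1 - F ^ 2) ≤ (a - b) / (a + b) := by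
    have h3 := Real.sqrt_le_sqrt h1F
    rwa [Real.sqrt_sq (div_nonneg (by linarith) hab0.le)] at h3
  have hst0 : (0:ℝ) < s * t := mul_pos hs0 ht0
  have hlog : Real.log (s * t) / 4 = Real.log (Real.sqrt (s * t)) / 2 := by
    rw [Real.log_sqrt hst0.le]; ring
  have htanh : Real.tanh (Real.log (s * t) / 4) = (a - b) / (a + b) := by
    rw [hlog, tanh_half_log (Real.sqrt_pos.mpr hst0)]
    have hk : Real.sqrt (s * t) = a / b := by
      rw [Real.sqrt_mul hs0.le, hadef, hbdef]
      field_simp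
    rw [hk]
    have hbne : b ≠ 0 := ne_of_gt hb0
    rw [div_sub_one (by positivity), div_add_one (by positivity)]
    rw [div_div_div_cancel_right₀]
    congr 1 <;> field_simp
  rw [htanh]
  exact hsq

lemma msup_attained {A B : Matrix n n ℂ} (hA : A.PosSemidef) (hB : B.PosSemidef)
    (tA : A.trace = 1) (tB : B.trace = 1) (hne : msupRatio A B ≠ ⊤) :
    ∃ s : ℝ, 1 ≤ s ∧ ((s : ℝ) • B - A).PosSemidef ∧ msupRatio A B = (s : EReal) := by
  classical
  set S : Set ℝ := {l : ℝ | (l • B - A).PosSemidef} with hSdef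
  have hSne : S.Nonempty := by
    by_contra h
    rw [Set.not_nonempty_iff_eq_empty] at h
    apply hne
    rw [msupRatio, ← hSdef, h, Set.image_empty, sInf_empty]
  have hmem_ge : ∀ l ∈ S, (1:ℝ) ≤ l := by
    intro l hl
    have h0 := trace_psd_nonneg hl
    have htr : (l • B - A).trace = ((l : ℂ) - 1) := by
      rw [trace_sub, real_smul_mat, trace_smul, tA, tB, smul_eq_mul, mul_one]
    rw [htr, Complex.le_def] at h0
    have := h0.1
    simpa using this
  have hbdd : BddBelow S := ⟨1, hmem_ge⟩
  set s := sInf S with hsdef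
  have hs1 : (1:ℝ) ≤ s := le_csInf hSne hmem_ge
  have hsS : s ∈ S := by
    rw [hSdef, Set.mem_setOf_eq]
    refine PosSemidef.of_dotProduct_mulVec_nonneg ?_ ?_
    · have hB' : ((s:ℝ) • B).IsHermitian := by
        rw [real_smul_mat]
        unfold Matrix.IsHermitian
        rw [conjTranspose_smul]
        rw [Complex.star_def, Complex.conj_ofReal, hB.1.eq]
      exact hB'.sub hA.1
    · intro x
      set q : ℂ := star x ⬝ᵥ B *ᵥ x with hq
      set p : ℂ := star x ⬝ᵥ A *ᵥ x with hp
      have hval : ∀ l : ℝ, star x ⬝ᵥ (l • B - A) *ᵥ x = (l:ℂ) * q - p := by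
        intro l
        rw [sub_mulVec, dotProduct_sub, real_smul_mat, smul_mulVec, dotProduct_smul,
          smul_eq_mul]
      have hqnn : 0 ≤ q := hB.dotProduct_mulVec_nonneg x
      have hpnn : 0 ≤ p := hA.dotProduct_mulVec_nonneg x
      have hqim : q.im = 0 := by rw [Complex.le_def] at hqnn; simpa using hqnn.2.symm
      have hpim : p.im = 0 := by rw [Complex.le_def] at hpnn; simpa using hpnn.2.symm
      have hqre : 0 ≤ q.re := by rw [Complex.le_def] at hqnn; simpa using hqnn.1
      have hpre : 0 ≤ p.re := by rw [Complex.le_def] at hpnn; simpa using hpnn.1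
      have hreal : ∀ l ∈ S, p.re ≤ l * q.re := by
        intro l hl
        have h0 := hl.dotProduct_mulVec_nonneg x
        rw [hval l, Complex.le_def] at h0
        have := h0.1
        simp only [Complex.sub_re, Complex.mul_re, Complex.ofReal_re, Complex.ofReal_im,
          Complex.zero_re, hqim] at this
        linarith
      have hfin : p.re ≤ s * q.re := by
        rcases eq_or_lt_of_le hqre with h | h
        · obtain ⟨l, hl⟩ := hSne
          have := hreal l hl
          rw [← h] at this ⊢
          simpa using this
        · have hlb : p.re / q.re ≤ s := by
            apply le_csInf hSne
            intro l hl
            rw [div_le_iff₀ h]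
            exact hreal l hl
          calc p.re = (p.re / q.re) * q.re := by field_simp
            _ ≤ s * q.re := mul_le_mul_of_nonneg_right hlb hqre
      rw [hval s, Complex.le_def]
      constructor
      · simp only [Complex.sub_re, Complex.mul_re, Complex.ofReal_re, Complex.ofReal_im,
          Complex.zero_re, hqim]
        simpa using hfin
      · simp [Complex.sub_im, Complex.mul_im, hqim, hpim]
  refine ⟨s, hs1, hsS, ?_⟩
  apply le_antisymm
  · exact sInf_le ⟨s, hsS, rfl⟩
  · apply le_sInf
    rintro b ⟨l, hl, rfl⟩
    exact EReal.coe_le_coe_iff.mpr (csInf_le hbdd hl)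

/-- **Fidelity vs. Hilbert's projective metric.** -/
theorem fidelity_vs_hilbert_metric
    {d : ℕ} (ρ₁ ρ₂ : Matrix (Fin d) (Fin d) ℂ)
    (h₁ : ρ₁.PosSemidef) (h₂ : ρ₂.PosSemidef)
    (t₁ : ρ₁.trace = 1) (t₂ : ρ₂.trace = 1) :
    Real.sqrt (1 - fidelity ρ₁ ρ₂ ^ 2) ≤ tanhQuarter (mHilbert ρ₁ ρ₂) := by
  by_cases htop : msupRatio ρ₁ ρ₂ = ⊤ ∨ msupRatio ρ₂ ρ₁ = ⊤
  · rw [mHilbert, if_pos htop, tanhQuarter, if_pos rfl]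
    have hle : 1 - fidelity ρ₁ ρ₂ ^ 2 ≤ 1 := by nlinarith [sq_nonneg (fidelity ρ₁ ρ₂)]
    calc Real.sqrt (1 - fidelity ρ₁ ρ₂ ^ 2) ≤ Real.sqrt 1 := Real.sqrt_le_sqrt hle
      _ = 1 := Real.sqrt_one
  · push_neg at htop
    obtain ⟨s, hs1, hsP, hseq⟩ := msup_attained h₁ h₂ t₁ t₂ htop.1
    obtain ⟨t, ht1, htP, hteq⟩ := msup_attained h₂ h₁ t₂ t₁ htop.2
    rw [mHilbert, if_neg (not_or.mpr htop), hseq, hteq, EReal.toReal_coe, EReal.toReal_coe,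
      tanhQuarter, if_neg (EReal.coe_ne_top _), EReal.toReal_coe]
    exact main_core h₁ h₂ t₁ t₂ hsP htP hs1 ht1

end
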